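/- Suppose k has characteristic p > 0 and let F, G, H ∈ k[x,y] be nonzero homogeneous polynomials. Then δ(F^p, G^p, H^p) = p·δ(F,G,H). -/

import Mathlib

open MvPolynomial Classical

noncomputable section

/-- A syzygy of `(F,G,H)` of degree `m`. -/
def IsSyzOfDeg {k : Type*} [Field k] (F G H : MvPolynomial (Fin 2) k) (m : ℕ) : Prop :=
  ∃ a b c : MvPolynomial (Fin 2) k,
    ¬(a = 0 ∧ b = 0 ∧ c = 0) ∧
    a * F + b * G + c * H = 0 ∧
    (a * F).IsHomogeneous m ∧ (b * G).IsHomogeneous m ∧ (c * H).IsHomogeneous m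

/-- `m(F,G,H)`: least degree of a syzygy of `(F,G,H)`. -/
def minSyzDeg {k : Type*} [Field k] (F G H : MvPolynomial (Fin 2) k) : ℕ :=
  sInf {m | IsSyzOfDeg F G H m}

/-- `δ(F,G,H) = deg F + deg G + deg H - 2 m(F,G,H)`. -/
def sdelta {k : Type*} [Field k] (F G H : MvPolynomial (Fin 2) k) : ℤ :=
  (F.totalDegree : ℤ) + G.totalDegree + H.totalDegree - 2 * (minSyzDeg F G H : ℤ)

/-- Pairwise prime linear forms. -/
def PairwisePrimeLinear {k : Type*} [Field k] {n : ℕ} (ℓ : Fin n → MvPolynomial (Fin 2) k) : Prop :=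
  (∀ i, ℓ i ≠ 0 ∧ (ℓ i).IsHomogeneous 1) ∧
  ∀ i j, i ≠ j → ∀ P : MvPolynomial (Fin 2) k, P ∣ ℓ i → P ∣ ℓ j → IsUnit P

/-- A cell with respect to the linear forms `ℓ`. -/
def IsCell {k : Type*} [Field k] {n : ℕ} (ℓ : Fin n → MvPolynomial (Fin 2) k)
    (F G H : MvPolynomial (Fin 2) k) : Prop :=
  F ≠ 0 ∧ G ≠ 0 ∧ H ≠ 0 ∧
  (∃ d, F.IsHomogeneous d) ∧ (∃ d, G.IsHomogeneous d) ∧ (∃ d, H.IsHomogeneous d) ∧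
  ∀ P : MvPolynomial (Fin 2) k, P ∣ F → P ∣ G → P ∣ (H * ∏ i, ℓ i) → IsUnit P

/-- Membership in `𝓘ⁿ = ([0,1] ∩ ℤ[1/p])ⁿ`. -/
def InI (p : ℕ) {n : ℕ} (t : Fin n → ℚ) : Prop :=
  ∃ e : ℕ, ∃ a : Fin n → ℕ, (∀ i, a i ≤ p ^ e) ∧ ∀ i, t i = (a i : ℚ) / (p ^ e : ℚ)

/-- The syzygy gap fractal `δ_C : 𝓘ⁿ → ℚ` (extended by `0` off `𝓘ⁿ`). -/
def deltaC (p : ℕ) {k : Type*} [Field k] {n : ℕ} (ℓ : Fin n → MvPolynomial (Fin 2) k)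
    (F G H : MvPolynomial (Fin 2) k) (t : Fin n → ℚ) : ℚ :=
  if h : InI p t then
    ((sdelta (F ^ p ^ h.choose) (G ^ p ^ h.choose)
        (H ^ p ^ h.choose * ∏ i, ℓ i ^ h.choose_spec.choose i) : ℤ) : ℚ) / (p ^ h.choose : ℚ)
  else 0

/-- Taxi-cab distance. -/
def taxi {n : ℕ} (t u : Fin n → ℚ) : ℚ := ∑ i, |t i - u i|

namespace SyzAux

variable {σ : Type*} {k : Type*} [Field k]

lemma homogComp_mul (F : MvPolynomial σ k) {d : ℕ} (hF : F.IsHomogeneous d)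
    (A : MvPolynomial σ k) (i : ℕ) :
    homogeneousComponent i A * F = homogeneousComponent (i + d) (A * F) := by
  induction A using MvPolynomial.induction_on' with
  | monomial n c =>
      have h1 : (monomial n c : MvPolynomial σ k).IsHomogeneous n.degree :=
        isHomogeneous_monomial c rfl
      rw [homogeneousComponent_of_mem ((mem_homogeneousSubmodule _ _).2 h1),
        homogeneousComponent_of_mem ((mem_homogeneousSubmodule _ _).2 (h1.mul hF))]
      by_cases h : i = n.degree
      · rw [if_pos h, if_pos (by omega)]
      · rw [if_neg h, if_neg (by omega), zero_mul]
  | add A B hA hB =>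
      rw [map_add, add_mul, hA, hB, add_mul, map_add]

/-- In `k[x]`, a divisor of a nonzero homogeneous polynomial is homogeneous. -/
lemma eq_zero_or_homog {F A : MvPolynomial σ k} {d M : ℕ}
    (hF : F.IsHomogeneous d) (hF0 : F ≠ 0) (hAF : (A * F).IsHomogeneous M) :
    A = 0 ∨ ∃ e, e + d = M ∧ A.IsHomogeneous e := by
  have hcomp : ∀ i, i + d ≠ M → homogeneousComponent i A = 0 := by
    intro i hi
    have h0 : homogeneousComponent (i + d) (A * F) = 0 := by
      rw [homogeneousComponent_of_mem ((mem_homogeneousSubmodule _ _).2 hAF), if_neg hi]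
    have hmul := homogComp_mul F hF A i
    rw [h0] at hmul
    rcases mul_eq_zero.mp hmul with h | h
    · exact h
    · exact absurd h hF0
  by_cases hex : ∃ i ∈ Finset.range (A.totalDegree + 1), i + d = M
  · obtain ⟨i, hir, hid⟩ := hex
    have hA' : A = homogeneousComponent i A := by
      conv_lhs => rw [← sum_homogeneousComponent A]
      exact Finset.sum_eq_single_of_mem i hir (fun j _ hj => hcomp j (by omega))
    exact Or.inr ⟨i, hid, hA' ▸ homogeneousComponent_isHomogeneous i A⟩
  · push_neg at hex
    left
    conv_lhs => rw [← sum_homogeneousComponent A]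
    exact Finset.sum_eq_zero (fun i hi => hcomp i (hex i hi))

lemma homog_map (f : k →+* k) {Q : MvPolynomial σ k} {d : ℕ}
    (hQ : Q.IsHomogeneous d) : (map f Q).IsHomogeneous d := by
  intro e he
  apply hQ
  intro h
  rw [coeff_map, h, map_zero] at he
  exact he rfl

lemma psmul_inj (p : ℕ) (hp : 0 < p) (v : σ →₀ ℕ) :
    Function.Injective (fun n : σ →₀ ℕ => p • n + v) := by
  intro n n' h
  ext i
  have h1 := DFunLike.congr_fun h i
  simp only [Finsupp.add_apply, Finsupp.smul_apply, smul_eq_mul] at h1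
  have h2 : p * n i = p * n' i := by omega
  exact Nat.eq_of_mul_eq_mul_left hp h2

/-- Extraction of the `v`-component with respect to the decomposition of `k[x]` over
`p`-th powers of the variables. -/
def theta (p : ℕ) (hp : 0 < p) (v : σ →₀ ℕ) (A : MvPolynomial σ k) : MvPolynomial σ k :=
  AddMonoidAlgebra.ofCoeff (Finsupp.comapDomain (fun n => p • n + v) (AddMonoidAlgebra.coeff A) (psmul_inj p hp v).injOn)

lemma coeff_theta (p : ℕ) (hp : 0 < p) (v : σ →₀ ℕ) (A : MvPolynomial σ k) (n : σ →₀ ℕ) :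
    coeff n (theta p hp v A) = coeff (p • n + v) A :=
  rfl

lemma theta_add (p : ℕ) (hp : 0 < p) (v : σ →₀ ℕ) (A B : MvPolynomial σ k) :
    theta p hp v (A + B) = theta p hp v A + theta p hp v B := by
  apply MvPolynomial.ext
  intro n
  rw [coeff_add, coeff_theta, coeff_theta, coeff_theta, coeff_add]

lemma theta_zero (p : ℕ) (hp : 0 < p) (v : σ →₀ ℕ) :
    theta p hp v (0 : MvPolynomial σ k) = 0 := by
  apply MvPolynomial.ext
  intro n
  rw [coeff_theta, coeff_zero, coeff_zero]

lemma theta_pow_mul (p : ℕ) [CharP k p] [Fact p.Prime] (hp : 0 < p) (v : σ →₀ ℕ)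
    (hv : ∀ i, v i < p) (Q A : MvPolynomial σ k) :
    theta p hp v (Q ^ p * A) = map (frobenius k p) Q * theta p hp v A := by
  induction Q using MvPolynomial.induction_on' with
  | add Q1 Q2 h1 h2 =>
      rw [add_pow_char, add_mul, theta_add, h1, h2, map_add, add_mul]
  | monomial u c =>
      rw [monomial_pow, map_monomial]
      apply MvPolynomial.ext
      intro n
      rw [coeff_theta, coeff_monomial_mul', coeff_monomial_mul']
      have hle : p • u ≤ p • n + v ↔ u ≤ n := by
        constructor
        · intro h i
          have h1 := h i
          simp only [Finsupp.add_apply, Finsupp.smul_apply, smul_eq_mul] at h1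
          have hvi := hv i
          by_contra hc
          push_neg at hc
          have h3 : p * (n i + 1) ≤ p * u i := Nat.mul_le_mul_left p hc
          rw [Nat.mul_add, Nat.mul_one] at h3
          omega
        · intro h i
          have h1 := h i
          simp only [Finsupp.add_apply, Finsupp.smul_apply, smul_eq_mul]
          have : p * u i ≤ p * n i := Nat.mul_le_mul_left p h1
          omega
      by_cases h : u ≤ n
      · rw [if_pos (hle.2 h), if_pos h, coeff_theta]
        have hidx : p • n + v - p • u = p • (n - u) + v := by
          ext i
          have h1 := h i
          simp only [Finsupp.tsub_apply, Finsupp.add_apply, Finsupp.smul_apply, smul_eq_mul]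
          rw [Nat.mul_sub]
          have : p * u i ≤ p * n i := Nat.mul_le_mul_left p h1
          omega
        rw [hidx]
        rfl
      · rw [if_neg (fun hc => h (hle.1 hc)), if_neg h]

lemma theta_homog (p : ℕ) (hp : 0 < p) (v : σ →₀ ℕ) {A : MvPolynomial σ k} {E : ℕ}
    (hA : A.IsHomogeneous E) (h0 : theta p hp v A ≠ 0) :
    ∃ e, (theta p hp v A).IsHomogeneous e ∧ p * e + Finsupp.weight 1 v = E := by
  obtain ⟨n₀, hn₀⟩ := MvPolynomial.support_nonempty.2 h0
  rw [MvPolynomial.mem_support_iff] at hn₀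
  have key : ∀ d : σ →₀ ℕ, coeff d (theta p hp v A) ≠ 0 →
      p * Finsupp.weight 1 d + Finsupp.weight 1 v = E := by
    intro d hd
    rw [coeff_theta] at hd
    have h := hA hd
    rw [map_add, AddMonoidHom.map_nsmul, smul_eq_mul] at h
    exact h
  refine ⟨Finsupp.weight 1 n₀, ?_, key n₀ hn₀⟩
  intro d hd
  have h1 := key d hd
  have h2 := key n₀ hn₀
  exact Nat.eq_of_mul_eq_mul_left hp (by omega)

variable (k) in
/-- Index type for a basis of `k` over the image of Frobenius. -/
def BIdx (p : ℕ) [CharP k p] [Fact p.Prime] : Type _ :=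
  Module.Basis.ofVectorSpaceIndex ((frobenius k p).fieldRange) k

variable (k) in
def kbasis (p : ℕ) [CharP k p] [Fact p.Prime] :
    Module.Basis (BIdx k p) ((frobenius k p).fieldRange) k :=
  Module.Basis.ofVectorSpace _ k

/-- `p`-th root of the `lam`-th coordinate. -/
def psi (p : ℕ) [CharP k p] [Fact p.Prime] (lam : BIdx k p) (z : k) : k :=
  Classical.choose (RingHom.mem_fieldRange.mp ((kbasis k p).repr z lam).2)

lemma phi_psi (p : ℕ) [CharP k p] [Fact p.Prime] (lam : BIdx k p) (z : k) :
    frobenius k p (psi p lam z) = ((kbasis k p).repr z lam : k) :=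
  Classical.choose_spec (RingHom.mem_fieldRange.mp ((kbasis k p).repr z lam).2)

lemma psi_add (p : ℕ) [CharP k p] [Fact p.Prime] (lam : BIdx k p) (x y : k) :
    psi p lam (x + y) = psi p lam x + psi p lam y := by
  apply (frobenius k p).injective
  rw [map_add, phi_psi, phi_psi, phi_psi, map_add, Finsupp.add_apply]
  push_cast
  ring

lemma psi_zero (p : ℕ) [CharP k p] [Fact p.Prime] (lam : BIdx k p) :
    psi p lam (0 : k) = 0 := by
  apply (frobenius k p).injective
  rw [phi_psi, map_zero, map_zero]
  simp

lemma psi_phi_mul (p : ℕ) [CharP k p] [Fact p.Prime] (lam : BIdx k p) (c z : k) :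
    psi p lam (frobenius k p c * z) = c * psi p lam z := by
  have hmem : frobenius k p c ∈ (frobenius k p).fieldRange := ⟨c, rfl⟩
  have hz : frobenius k p c * z = (⟨_, hmem⟩ : (frobenius k p).fieldRange) • z := by
    rw [Algebra.smul_def]
    rfl
  apply (frobenius k p).injective
  rw [phi_psi, hz, map_smul, Finsupp.smul_apply, map_mul, phi_psi]
  rw [smul_eq_mul]
  push_cast
  ring

lemma psi_ne (p : ℕ) [CharP k p] [Fact p.Prime] {z : k} (hz : z ≠ 0) :
    ∃ lam : BIdx k p, psi p lam z ≠ 0 := by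
  have h1 : (kbasis k p).repr z ≠ 0 := by
    intro h
    apply hz
    simpa using (kbasis k p).repr.map_eq_zero_iff.mp h
  obtain ⟨lam, hlam⟩ := Finsupp.ne_iff.mp h1
  refine ⟨lam, fun h => ?_⟩
  apply hlam
  have h2 := phi_psi p lam z
  rw [h, map_zero] at h2
  simp only [Finsupp.coe_zero, Pi.zero_apply]
  exact Subtype.ext h2.symm

/-- Coefficientwise application of `psi`. -/
def Psi (p : ℕ) [CharP k p] [Fact p.Prime] (lam : BIdx k p) (A : MvPolynomial σ k) :
    MvPolynomial σ k :=
  AddMonoidAlgebra.ofCoeff (Finsupp.mapRange (psi p lam) (psi_zero p lam) (AddMonoidAlgebra.coeff A))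

lemma coeff_Psi (p : ℕ) [CharP k p] [Fact p.Prime] (lam : BIdx k p) (A : MvPolynomial σ k)
    (n : σ →₀ ℕ) : coeff n (Psi p lam A) = psi p lam (coeff n A) :=
  rfl

lemma Psi_add (p : ℕ) [CharP k p] [Fact p.Prime] (lam : BIdx k p) (A B : MvPolynomial σ k) :
    Psi p lam (A + B) = Psi p lam A + Psi p lam B := by
  apply MvPolynomial.ext
  intro n
  rw [coeff_add, coeff_Psi, coeff_Psi, coeff_Psi, coeff_add, psi_add]

lemma Psi_zero (p : ℕ) [CharP k p] [Fact p.Prime] (lam : BIdx k p) :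
    Psi p lam (0 : MvPolynomial σ k) = 0 := by
  apply MvPolynomial.ext
  intro n
  rw [coeff_Psi, coeff_zero, psi_zero]

lemma Psi_map_mul (p : ℕ) [CharP k p] [Fact p.Prime] (lam : BIdx k p)
    (Q A : MvPolynomial σ k) :
    Psi p lam (map (frobenius k p) Q * A) = Q * Psi p lam A := by
  induction Q using MvPolynomial.induction_on' with
  | add Q1 Q2 h1 h2 =>
      rw [map_add, add_mul, Psi_add, h1, h2, add_mul]
  | monomial u c =>
      rw [map_monomial]
      apply MvPolynomial.ext
      intro n
      rw [coeff_Psi, coeff_monomial_mul', coeff_monomial_mul']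
      by_cases h : u ≤ n
      · rw [if_pos h, if_pos h, psi_phi_mul, coeff_Psi]
      · rw [if_neg h, if_neg h, psi_zero]

lemma Psi_homog (p : ℕ) [CharP k p] [Fact p.Prime] (lam : BIdx k p)
    {A : MvPolynomial σ k} {E : ℕ} (hA : A.IsHomogeneous E) :
    (Psi p lam A).IsHomogeneous E := by
  intro d hd
  apply hA
  intro h
  rw [coeff_Psi, h, psi_zero] at hd
  exact hd rfl

lemma syz_pow (p : ℕ) [CharP k p] [Fact p.Prime] {F G H : MvPolynomial (Fin 2) k} {m : ℕ}
    (hs : IsSyzOfDeg F G H m) : IsSyzOfDeg (F ^ p) (G ^ p) (H ^ p) (p * m) := by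
  have hp0 : p ≠ 0 := (Fact.out : p.Prime).ne_zero
  obtain ⟨a, b, c, hne, hrel, h1, h2, h3⟩ := hs
  refine ⟨a ^ p, b ^ p, c ^ p, ?_, ?_, ?_, ?_, ?_⟩
  · intro ⟨ha, hb, hc⟩
    exact hne ⟨(pow_eq_zero_iff hp0).mp ha, (pow_eq_zero_iff hp0).mp hb,
      (pow_eq_zero_iff hp0).mp hc⟩
  · calc a ^ p * F ^ p + b ^ p * G ^ p + c ^ p * H ^ p
        = (a * F + b * G + c * H) ^ p := by
          rw [add_pow_char, add_pow_char, mul_pow, mul_pow, mul_pow]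
      _ = 0 := by rw [hrel, zero_pow hp0]
  · rw [← mul_pow, mul_comm p m]; exact h1.pow p
  · rw [← mul_pow, mul_comm p m]; exact h2.pow p
  · rw [← mul_pow, mul_comm p m]; exact h3.pow p

lemma syz_unpow (p : ℕ) [CharP k p] [Fact p.Prime] {F G H : MvPolynomial (Fin 2) k}
    {dF dG dH M : ℕ}
    (hFh : F.IsHomogeneous dF) (hF0 : F ≠ 0)
    (hGh : G.IsHomogeneous dG) (hG0 : G ≠ 0)
    (hHh : H.IsHomogeneous dH) (hH0 : H ≠ 0)
    (hs : IsSyzOfDeg (F ^ p) (G ^ p) (H ^ p) M) :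
    ∃ M', p * M' ≤ M ∧
      IsSyzOfDeg (map (frobenius k p) F) (map (frobenius k p) G) (map (frobenius k p) H) M' := by
  have hp0 : 0 < p := (Fact.out : p.Prime).pos
  obtain ⟨a, b, c, hne, hrel, h1, h2, h3⟩ := hs
  obtain ⟨n, hn⟩ : ∃ n : Fin 2 →₀ ℕ, coeff n a ≠ 0 ∨ coeff n b ≠ 0 ∨ coeff n c ≠ 0 := by
    by_contra hcon
    push_neg at hcon
    exact hne ⟨MvPolynomial.eq_zero_iff.2 fun d => (hcon d).1,
      MvPolynomial.eq_zero_iff.2 fun d => (hcon d).2.1,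
      MvPolynomial.eq_zero_iff.2 fun d => (hcon d).2.2⟩
  set v : Fin 2 →₀ ℕ := Finsupp.mapRange (· % p) (Nat.zero_mod p) n with hv
  set q : Fin 2 →₀ ℕ := Finsupp.mapRange (· / p) (Nat.zero_div p) n with hq
  have hqv : p • q + v = n := by
    ext i
    simp only [Finsupp.add_apply, Finsupp.smul_apply, smul_eq_mul, hv, hq,
      Finsupp.mapRange_apply]
    exact Nat.div_add_mod (n i) p
  have hvlt : ∀ i, v i < p := fun i => by
    simp only [hv, Finsupp.mapRange_apply]
    exact Nat.mod_lt _ hp0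
  have hteq : ∀ x : MvPolynomial (Fin 2) k, coeff q (theta p hp0 v x) = coeff n x := by
    intro x
    rw [coeff_theta, hqv]
  have hnz : theta p hp0 v a ≠ 0 ∨ theta p hp0 v b ≠ 0 ∨ theta p hp0 v c ≠ 0 := by
    rcases hn with h | h | h
    · exact Or.inl fun h0 => h (by rw [← hteq a, h0, coeff_zero])
    · exact Or.inr (Or.inl fun h0 => h (by rw [← hteq b, h0, coeff_zero]))
    · exact Or.inr (Or.inr fun h0 => h (by rw [← hteq c, h0, coeff_zero]))
  rw [mul_comm a (F ^ p), mul_comm b (G ^ p), mul_comm c (H ^ p)] at hrel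
  have hrel' := congrArg (theta p hp0 v) hrel
  rw [theta_add, theta_add, theta_zero, theta_pow_mul p hp0 v hvlt F a,
    theta_pow_mul p hp0 v hvlt G b, theta_pow_mul p hp0 v hvlt H c] at hrel'
  rw [mul_comm (F ^ p) a, mul_comm (G ^ p) b, mul_comm (H ^ p) c] at hrel
  have step : ∀ (Q x : MvPolynomial (Fin 2) k) (d : ℕ), Q.IsHomogeneous d → Q ≠ 0 →
      (x * Q ^ p).IsHomogeneous M →
      theta p hp0 v x = 0 ∨
        ∃ e, p * (e + d) + Finsupp.weight 1 v = M ∧ (theta p hp0 v x).IsHomogeneous e := by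
    intro Q x d hQ hQ0 hx
    by_cases h0 : theta p hp0 v x = 0
    · exact Or.inl h0
    have hx0 : x ≠ 0 := fun h => h0 (by rw [h, theta_zero])
    rcases eq_zero_or_homog (hQ.pow p) (pow_ne_zero p hQ0) hx with h | ⟨e1, he1, hx1⟩
    · exact absurd h hx0
    obtain ⟨e, hhom, hpe⟩ := theta_homog p hp0 v hx1 h0
    refine Or.inr ⟨e, ?_, hhom⟩
    rw [Nat.mul_add, mul_comm p d]
    omega
  have stF := step F a dF hFh hF0 h1
  have stG := step G b dG hGh hG0 h2
  have stH := step H c dH hHh hH0 h3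
  obtain ⟨M', hM'⟩ : ∃ M', p * M' + Finsupp.weight 1 v = M := by
    rcases hnz with h | h | h
    · rcases stF with h0 | ⟨e, hpe, _⟩
      · exact absurd h0 h
      · exact ⟨e + dF, hpe⟩
    · rcases stG with h0 | ⟨e, hpe, _⟩
      · exact absurd h0 h
      · exact ⟨e + dG, hpe⟩
    · rcases stH with h0 | ⟨e, hpe, _⟩
      · exact absurd h0 h
      · exact ⟨e + dH, hpe⟩
  have mkhom : ∀ (Q x : MvPolynomial (Fin 2) k) (d : ℕ), Q.IsHomogeneous d →
      (theta p hp0 v x = 0 ∨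
        ∃ e, p * (e + d) + Finsupp.weight 1 v = M ∧ (theta p hp0 v x).IsHomogeneous e) →
      (theta p hp0 v x * map (frobenius k p) Q).IsHomogeneous M' := by
    intro Q x d hQ hst
    rcases hst with h0 | ⟨e, hpe, hhom⟩
    · rw [h0, zero_mul]
      exact isHomogeneous_zero _ _ _
    · have hed : e + d = M' := Nat.eq_of_mul_eq_mul_left hp0 (by omega)
      rw [← hed]
      exact hhom.mul (homog_map _ hQ)
  refine ⟨M', by omega, theta p hp0 v a, theta p hp0 v b, theta p hp0 v c, ?_,
    by linear_combination hrel', mkhom F a dF hFh stF, mkhom G b dG hGh stG,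
    mkhom H c dH hHh stH⟩
  intro ⟨ha, hb, hc⟩
  rcases hnz with h | h | h
  exacts [h ha, h hb, h hc]

lemma syz_unphi (p : ℕ) [CharP k p] [Fact p.Prime] {F G H : MvPolynomial (Fin 2) k}
    {dF dG dH s : ℕ}
    (hFh : F.IsHomogeneous dF) (hF0 : F ≠ 0)
    (hGh : G.IsHomogeneous dG) (hG0 : G ≠ 0)
    (hHh : H.IsHomogeneous dH) (hH0 : H ≠ 0)
    (hs : IsSyzOfDeg (map (frobenius k p) F) (map (frobenius k p) G) (map (frobenius k p) H) s) :
    IsSyzOfDeg F G H s := by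
  obtain ⟨a, b, c, hne, hrel, h1, h2, h3⟩ := hs
  obtain ⟨n, hn⟩ : ∃ n : Fin 2 →₀ ℕ, coeff n a ≠ 0 ∨ coeff n b ≠ 0 ∨ coeff n c ≠ 0 := by
    by_contra hcon
    push_neg at hcon
    exact hne ⟨MvPolynomial.eq_zero_iff.2 fun d => (hcon d).1,
      MvPolynomial.eq_zero_iff.2 fun d => (hcon d).2.1,
      MvPolynomial.eq_zero_iff.2 fun d => (hcon d).2.2⟩
  have hPsine : ∀ {x : MvPolynomial (Fin 2) k} (lam : BIdx k p),
      psi p lam (coeff n x) ≠ 0 → Psi p lam x ≠ 0 := by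
    intro x lam hx h0
    apply hx
    rw [← coeff_Psi, h0, coeff_zero]
  obtain ⟨lam, hlam⟩ : ∃ lam : BIdx k p,
      Psi p lam a ≠ 0 ∨ Psi p lam b ≠ 0 ∨ Psi p lam c ≠ 0 := by
    rcases hn with h | h | h
    · obtain ⟨lam, hl⟩ := psi_ne p h
      exact ⟨lam, Or.inl (hPsine lam hl)⟩
    · obtain ⟨lam, hl⟩ := psi_ne p h
      exact ⟨lam, Or.inr (Or.inl (hPsine lam hl))⟩
    · obtain ⟨lam, hl⟩ := psi_ne p h
      exact ⟨lam, Or.inr (Or.inr (hPsine lam hl))⟩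
  have hmap : ∀ {X : MvPolynomial (Fin 2) k}, X ≠ 0 → map (frobenius k p) X ≠ 0 := by
    intro X hX h
    apply hX
    apply MvPolynomial.map_injective (frobenius k p) (frobenius k p).injective
    rw [h, map_zero]
  have step : ∀ (Q x : MvPolynomial (Fin 2) k) (d : ℕ), Q.IsHomogeneous d → Q ≠ 0 →
      (x * map (frobenius k p) Q).IsHomogeneous s → (Psi p lam x * Q).IsHomogeneous s := by
    intro Q x d hQ hQ0 hx
    rcases eq_zero_or_homog (homog_map _ hQ) (hmap hQ0) hx with h | ⟨e, hed, hxh⟩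
    · rw [h, Psi_zero, zero_mul]
      exact isHomogeneous_zero _ _ _
    · rw [← hed]
      exact (Psi_homog p lam hxh).mul hQ
  rw [mul_comm a, mul_comm b, mul_comm c] at hrel
  have hrel' := congrArg (Psi p lam) hrel
  rw [Psi_add, Psi_add, Psi_zero, Psi_map_mul, Psi_map_mul, Psi_map_mul] at hrel'
  rw [mul_comm _ a, mul_comm _ b, mul_comm _ c] at hrel
  refine ⟨Psi p lam a, Psi p lam b, Psi p lam c, ?_, by linear_combination hrel',
    step F a dF hFh hF0 h1, step G b dG hGh hG0 h2, step H c dH hHh hH0 h3⟩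
  intro ⟨ha, hb, hc⟩
  rcases hlam with h | h | h
  exacts [h ha, h hb, h hc]

end SyzAux

theorem stmt8 (p : ℕ) {k : Type*} [Field k] [CharP k p] (hp : 0 < p)
    (F G H : MvPolynomial (Fin 2) k)
    (hF0 : F ≠ 0) (hG0 : G ≠ 0) (hH0 : H ≠ 0)
    (hF : ∃ d, F.IsHomogeneous d) (hG : ∃ d, G.IsHomogeneous d) (hH : ∃ d, H.IsHomogeneous d) :
    sdelta (F ^ p) (G ^ p) (H ^ p) = p * sdelta F G H := by
  have hp' : p.Prime := (CharP.char_is_prime_or_zero k p).resolve_right hp.ne'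
  haveI := Fact.mk hp'
  obtain ⟨dF, hFh⟩ := hF
  obtain ⟨dG, hGh⟩ := hG
  obtain ⟨dH, hHh⟩ := hH
  have hwit : IsSyzOfDeg F G H (dG + dF) := by
    refine ⟨G, -F, 0, ?_, by ring, hGh.mul hFh, ?_, ?_⟩
    · intro ⟨h, _, _⟩
      exact hG0 h
    · rw [add_comm dG dF]
      exact hFh.neg.mul hGh
    · rw [zero_mul]
      exact isHomogeneous_zero _ _ _
  have hSne : {m | IsSyzOfDeg F G H m}.Nonempty := ⟨_, hwit⟩
  have hmmem : IsSyzOfDeg F G H (minSyzDeg F G H) := Nat.sInf_mem hSne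
  set m := minSyzDeg F G H with hm
  have hle : minSyzDeg (F ^ p) (G ^ p) (H ^ p) ≤ p * m :=
    Nat.sInf_le (SyzAux.syz_pow p hmmem)
  have hge : p * m ≤ minSyzDeg (F ^ p) (G ^ p) (H ^ p) := by
    have hne' : {n | IsSyzOfDeg (F ^ p) (G ^ p) (H ^ p) n}.Nonempty :=
      ⟨p * m, SyzAux.syz_pow p hmmem⟩
    apply le_csInf hne'
    intro M hM
    have hM2 : IsSyzOfDeg (F ^ p) (G ^ p) (H ^ p) M := hM
    obtain ⟨M', hpM', hsyz⟩ := SyzAux.syz_unpow p hFh hF0 hGh hG0 hHh hH0 hM2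
    have hM'syz : IsSyzOfDeg F G H M' := SyzAux.syz_unphi p hFh hF0 hGh hG0 hHh hH0 hsyz
    have hmM' : m ≤ M' := Nat.sInf_le hM'syz
    calc p * m ≤ p * M' := Nat.mul_le_mul_left p hmM'
      _ ≤ M := hpM'
  have hmin : minSyzDeg (F ^ p) (G ^ p) (H ^ p) = p * m := le_antisymm hle hge
  have tdF : F.totalDegree = dF := hFh.totalDegree hF0
  have tdG : G.totalDegree = dG := hGh.totalDegree hG0
  have tdH : H.totalDegree = dH := hHh.totalDegree hH0
  have tdFp : (F ^ p).totalDegree = dF * p := (hFh.pow p).totalDegree (pow_ne_zero p hF0)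
  have tdGp : (G ^ p).totalDegree = dG * p := (hGh.pow p).totalDegree (pow_ne_zero p hG0)
  have tdHp : (H ^ p).totalDegree = dH * p := (hHh.pow p).totalDegree (pow_ne_zero p hH0)
  rw [sdelta, sdelta, hmin, tdF, tdG, tdH, tdFp, tdGp, tdHp, ← hm]
  push_cast
  ring

end
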